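/- Let D(A) denote the minimal order of a finite open cover of a compact metric space X refining the finite open cover A. Then D(A ∨ B) ≤ D(A) + D(B) for any two finite open covers A and B of X. -/

import Mathlib

open scoped Classical

/-- The order of a finite cover: the supremum over points of the number of elements of the
cover containing the point, minus one. -/
noncomputable def ordC {Y : Type*} (α : Finset (Set Y)) : ℕ :=
  sSup {m : ℕ | ∃ y : Y, m + 1 ≤ (α.filter (fun A => y ∈ A)).card}

/-- A finite family of sets is an open cover if all its members are open and they cover. -/
def IsOpenCover {Y : Type*} [TopologicalSpace Y] (α : Finset (Set Y)) : Prop :=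
  (∀ A ∈ α, IsOpen A) ∧ ⋃₀ (α : Set (Set Y)) = Set.univ

/-- `β` refines `α` if every element of `β` is contained in some element of `α`. -/
def RefinesC {Y : Type*} (β α : Finset (Set Y)) : Prop :=
  ∀ B ∈ β, ∃ A ∈ α, B ⊆ A

/-- `D(α)`: minimal order of a finite open cover refining `α`. -/
noncomputable def Dcov {Y : Type*} [TopologicalSpace Y] (α : Finset (Set Y)) : ℕ :=
  sInf {m : ℕ | ∃ β : Finset (Set Y), IsOpenCover β ∧ RefinesC β α ∧ ordC β = m}

/-- The join `α ∨ β` of two finite covers. -/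
noncomputable def joinC {Y : Type*} (α β : Finset (Set Y)) : Finset (Set Y) :=
  (α ×ˢ β).image fun p => p.1 ∩ p.2

/- ----------------- auxiliary lemmas ----------------- -/

lemma ordC_le {Y : Type*} {α : Finset (Set Y)} {n : ℕ}
    (h : ∀ y : Y, (α.filter (fun A => y ∈ A)).card ≤ n + 1) : ordC α ≤ n := by
  rcases Set.eq_empty_or_nonempty
      {m : ℕ | ∃ y : Y, m + 1 ≤ (α.filter (fun A => y ∈ A)).card} with he | hne
  · rw [ordC, he, csSup_empty]; exact Nat.zero_le n
  · refine csSup_le hne ?_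
    rintro m ⟨y, hy⟩
    have := h y
    omega

lemma card_le_ordC {Y : Type*} (α : Finset (Set Y)) (y : Y) :
    (α.filter (fun A => y ∈ A)).card ≤ ordC α + 1 := by
  by_contra hc
  push_neg at hc
  have hb : BddAbove {m : ℕ | ∃ y : Y, m + 1 ≤ (α.filter (fun A => y ∈ A)).card} := by
    refine ⟨α.card, ?_⟩
    rintro m ⟨z, hz⟩
    have := Finset.card_filter_le α (fun A => z ∈ A)
    omega
  have : ordC α + 1 ≤ ordC α := le_csSup hb ⟨y, by omega⟩
  omega

/-- Counting overlapping intervals coming from two monotone subdivisions. -/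
lemma overlap_card (s t : ℕ → ℝ) (hs : Monotone s) (ht : Monotone t) (p q : ℕ) :
    ((Finset.range p ×ˢ Finset.range q).filter
      (fun ij => max (s ij.1) (t ij.2) < min (s (ij.1 + 1)) (t (ij.2 + 1)))).card
    ≤ ((((Finset.range p).filter (fun i => s i < s (i + 1))).image s) ∪
       (((Finset.range q).filter (fun j => t j < t (j + 1))).image t)).card := by
  apply Finset.card_le_card_of_injOn (fun ij => max (s ij.1) (t ij.2))
  · rintro ⟨i, j⟩ hij
    simp only [Finset.mem_coe, Finset.mem_filter, Finset.mem_product, Finset.mem_range] at hij ⊢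
    obtain ⟨⟨hi, hj⟩, ho⟩ := hij
    rcases max_choice (s i) (t j) with h | h
    · apply Finset.mem_union_left
      rw [h]
      refine Finset.mem_image_of_mem s (Finset.mem_filter.mpr ⟨Finset.mem_range.mpr hi, ?_⟩)
      exact lt_of_le_of_lt (le_max_left _ _) (lt_of_lt_of_le ho (min_le_left _ _))
    · apply Finset.mem_union_right
      rw [h]
      refine Finset.mem_image_of_mem t (Finset.mem_filter.mpr ⟨Finset.mem_range.mpr hj, ?_⟩)
      exact lt_of_le_of_lt (le_max_right _ _) (lt_of_lt_of_le ho (min_le_right _ _))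
  · have key : ∀ a b a' b' : ℕ, max (s a) (t b) < min (s (a + 1)) (t (b + 1)) →
        (a < a' ∨ (a = a' ∧ b < b')) →
        max (s a) (t b) < max (s a') (t b') := by
      rintro a b a' b' h1 (hlt | ⟨rfl, hlt⟩)
      · calc max (s a) (t b) < s (a + 1) := lt_of_lt_of_le h1 (min_le_left _ _)
          _ ≤ s a' := hs (by omega)
          _ ≤ max (s a') (t b') := le_max_left _ _
      · calc max (s a) (t b) < t (b + 1) := lt_of_lt_of_le h1 (min_le_right _ _)
          _ ≤ t b' := ht (by omega)
          _ ≤ max (s a) (t b') := le_max_right _ _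
    rintro ⟨i, j⟩ hij ⟨i', j'⟩ hij' heq
    simp only [Finset.coe_filter, Set.mem_setOf_eq, Finset.mem_product, Finset.mem_range]
      at hij hij'
    obtain ⟨-, o1⟩ := hij
    obtain ⟨-, o2⟩ := hij'
    simp only at heq o1 o2
    rcases lt_trichotomy i i' with h | h | h
    · exact absurd heq (ne_of_lt (key i j i' j' o1 (Or.inl h)))
    · subst h
      rcases lt_trichotomy j j' with h | h | h
      · exact absurd heq (ne_of_lt (key i j i j' o1 (Or.inr ⟨rfl, h⟩)))
      · simp [h]
      · exact absurd heq.symm (ne_of_lt (key i j' i j o2 (Or.inr ⟨rfl, h⟩)))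
    · exact absurd heq.symm (ne_of_lt (key i' j' i j o2 (Or.inl h)))

/- member functions -/

noncomputable def fAux {Y : Type*} [MetricSpace Y] (l : List (Set Y)) (i : ℕ) (x : Y) : ℝ :=
  if (l.getD i ∅)ᶜ = ∅ then 1 else Metric.infDist x (l.getD i ∅)ᶜ

lemma fAux_nonneg {Y : Type*} [MetricSpace Y] (l : List (Set Y)) (i : ℕ) (x : Y) :
    0 ≤ fAux l i x := by
  unfold fAux; split_ifs
  · norm_num
  · exact Metric.infDist_nonneg

lemma fAux_cont {Y : Type*} [MetricSpace Y] (l : List (Set Y)) (i : ℕ) :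
    Continuous (fun x => fAux l i x) := by
  unfold fAux; split_ifs
  · exact continuous_const
  · exact Metric.continuous_infDist_pt _

lemma fAux_pos_iff {Y : Type*} [MetricSpace Y] {l : List (Set Y)} {i : ℕ}
    (hop : IsOpen (l.getD i ∅)) (x : Y) : 0 < fAux l i x ↔ x ∈ l.getD i ∅ := by
  unfold fAux
  split_ifs with h
  · rw [Set.compl_empty_iff.mp h]
    simp only [Set.mem_univ, iff_true]
    norm_num
  · have hne : (l.getD i ∅)ᶜ.Nonempty := Set.nonempty_iff_ne_empty.mpr h
    have hcl : IsClosed (l.getD i ∅)ᶜ := hop.isClosed_compl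
    have h0 : x ∈ (l.getD i ∅)ᶜ ↔ Metric.infDist x (l.getD i ∅)ᶜ = 0 :=
      hcl.mem_iff_infDist_zero hne
    constructor
    · intro hpos
      by_contra hx
      have : Metric.infDist x (l.getD i ∅)ᶜ = 0 := h0.mp (Set.mem_compl_iff _ _ |>.mpr hx)
      linarith
    · intro hx
      have hne0 : Metric.infDist x (l.getD i ∅)ᶜ ≠ 0 := by
        intro e
        exact (Set.mem_compl_iff _ _ |>.mp (h0.mpr e)) hx
      exact lt_of_le_of_ne Metric.infDist_nonneg (Ne.symm hne0)

lemma fAux_eq_zero {Y : Type*} [MetricSpace Y] [Nonempty Y] {l : List (Set Y)} {i : ℕ}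
    (h : l.length ≤ i) (x : Y) : fAux l i x = 0 := by
  unfold fAux
  rw [List.getD_eq_default _ _ h]
  have : (∅ : Set Y)ᶜ ≠ ∅ := by
    simp [Set.compl_empty]
  rw [if_neg this, Set.compl_empty]
  exact Metric.infDist_zero_of_mem (Set.mem_univ x)

noncomputable def sAux {Y : Type*} [MetricSpace Y] (l : List (Set Y)) (i : ℕ) (x : Y) : ℝ :=
  ∑ k ∈ Finset.range i, fAux l k x

lemma sAux_succ {Y : Type*} [MetricSpace Y] (l : List (Set Y)) (i : ℕ) (x : Y) :
    sAux l (i + 1) x = sAux l i x + fAux l i x := Finset.sum_range_succ _ _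

lemma sAux_nonneg {Y : Type*} [MetricSpace Y] (l : List (Set Y)) (i : ℕ) (x : Y) :
    0 ≤ sAux l i x := Finset.sum_nonneg fun k _ => fAux_nonneg l k x

lemma sAux_mono {Y : Type*} [MetricSpace Y] (l : List (Set Y)) (x : Y) :
    Monotone (fun i => sAux l i x) := by
  intro i j hij
  exact Finset.sum_le_sum_of_subset_of_nonneg (Finset.range_subset_range.mpr hij)
    (fun k _ _ => fAux_nonneg l k x)

lemma sAux_cont {Y : Type*} [MetricSpace Y] (l : List (Set Y)) (i : ℕ) :
    Continuous (fun x => sAux l i x) :=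
  continuous_finset_sum _ fun k _ => fAux_cont l k

lemma cover_exists_pos {Y : Type*} [MetricSpace Y] {γ : Finset (Set Y)}
    (hγ : IsOpenCover γ) (x : Y) : ∃ i, i < γ.toList.length ∧ 0 < fAux γ.toList i x := by
  have hx : x ∈ ⋃₀ (γ : Set (Set Y)) := by rw [hγ.2]; exact Set.mem_univ x
  obtain ⟨C, hC, hxC⟩ := hx
  have hC' : C ∈ γ := hC
  have : C ∈ γ.toList := Finset.mem_toList.mpr hC'
  obtain ⟨n, hn⟩ := List.mem_iff_get.mp this
  refine ⟨n, n.isLt, ?_⟩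
  have hgd : γ.toList.getD (n : ℕ) ∅ = C := by
    rw [List.getD_eq_getElem _ _ n.isLt]
    simpa using hn
  have hop : IsOpen (γ.toList.getD (n : ℕ) ∅) := by
    rw [hgd]; exact hγ.1 C hC'
  rw [fAux_pos_iff hop, hgd]
  exact hxC

lemma total_pos {Y : Type*} [MetricSpace Y] {γ : Finset (Set Y)}
    (hγ : IsOpenCover γ) (x : Y) : 0 < sAux γ.toList γ.toList.length x := by
  obtain ⟨i, hi, hpos⟩ := cover_exists_pos hγ x
  calc (0:ℝ) < fAux γ.toList i x := hpos
    _ ≤ sAux γ.toList γ.toList.length x :=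
      Finset.single_le_sum (fun k _ => fAux_nonneg γ.toList k x) (Finset.mem_range.mpr hi)

/-- The overlap sets. -/
def wAux {Y : Type*} [MetricSpace Y] (lγ lδ : List (Set Y)) (i j : ℕ) : Set Y :=
  {x | max (sAux lγ i x * sAux lδ lδ.length x) (sAux lδ j x * sAux lγ lγ.length x)
     < min (sAux lγ (i + 1) x * sAux lδ lδ.length x) (sAux lδ (j + 1) x * sAux lγ lγ.length x)}

lemma wAux_open {Y : Type*} [MetricSpace Y] (lγ lδ : List (Set Y)) (i j : ℕ) :
    IsOpen (wAux lγ lδ i j) := by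
  apply isOpen_lt
  · exact Continuous.max ((sAux_cont lγ i).mul (sAux_cont lδ _))
      ((sAux_cont lδ j).mul (sAux_cont lγ _))
  · exact Continuous.min ((sAux_cont lγ (i+1)).mul (sAux_cont lδ _))
      ((sAux_cont lδ (j+1)).mul (sAux_cont lγ _))

/-- On `wAux`, the `i`-th γ-function and `j`-th δ-function are positive. -/
lemma wAux_pos {Y : Type*} [MetricSpace Y] {lγ lδ : List (Set Y)} {i j : ℕ} {x : Y}
    (hx : x ∈ wAux lγ lδ i j) :
    0 < fAux lγ i x ∧ 0 < fAux lδ j x := by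
  have h := hx
  simp only [wAux, Set.mem_setOf_eq] at h
  have h1 : sAux lγ i x * sAux lδ lδ.length x < sAux lγ (i + 1) x * sAux lδ lδ.length x :=
    lt_of_le_of_lt (le_max_left _ _) (lt_of_lt_of_le h (min_le_left _ _))
  have h2 : sAux lδ j x * sAux lγ lγ.length x < sAux lδ (j + 1) x * sAux lγ lγ.length x :=
    lt_of_le_of_lt (le_max_right _ _) (lt_of_lt_of_le h (min_le_right _ _))
  rw [sAux_succ] at h1 h2
  have hg := sAux_nonneg lδ lδ.length x
  have hf := sAux_nonneg lγ lγ.length x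
  have hfp := fAux_nonneg lγ i x
  have hhp := fAux_nonneg lδ j x
  constructor <;> nlinarith

/- ----------------- the key construction ----------------- -/

lemma key_construction {Y : Type*} [MetricSpace Y] [Nonempty Y] {γ δ : Finset (Set Y)}
    (hγ : IsOpenCover γ) (hδ : IsOpenCover δ) :
    ∃ ε : Finset (Set Y), IsOpenCover ε ∧
      (∀ E ∈ ε, ∃ C ∈ γ, ∃ D ∈ δ, E ⊆ C ∩ D) ∧ ordC ε ≤ ordC γ + ordC δ := by
  classical
  set lγ := γ.toList with hlγ
  set lδ := δ.toList with hlδ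
  set p := lγ.length with hp
  set q := lδ.length with hq
  have memγ : ∀ i, i < p → lγ.getD i ∅ ∈ γ := by
    intro i hi
    rw [List.getD_eq_getElem _ _ hi]
    exact Finset.mem_toList.mp (List.getElem_mem _)
  have memδ : ∀ j, j < q → lδ.getD j ∅ ∈ δ := by
    intro j hj
    rw [List.getD_eq_getElem _ _ hj]
    exact Finset.mem_toList.mp (List.getElem_mem _)
  have openγ : ∀ i, IsOpen (lγ.getD i ∅) := by
    intro i
    by_cases hi : i < p
    · exact hγ.1 _ (memγ i hi)
    · rw [List.getD_eq_default _ _ (by omega)]; exact isOpen_empty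
  have openδ : ∀ j, IsOpen (lδ.getD j ∅) := by
    intro j
    by_cases hj : j < q
    · exact hδ.1 _ (memδ j hj)
    · rw [List.getD_eq_default _ _ (by omega)]; exact isOpen_empty
  refine ⟨(Finset.range p ×ˢ Finset.range q).image (fun ij => wAux lγ lδ ij.1 ij.2), ?_, ?_, ?_⟩
  · constructor
    · intro A hA
      simp only [Finset.mem_image] at hA
      obtain ⟨ij, -, rfl⟩ := hA
      exact wAux_open lγ lδ ij.1 ij.2
    · apply Set.eq_univ_of_forall
      intro x
      -- find the first positive indices
      have hexγ : ∃ i, 0 < fAux lγ i x := (cover_exists_pos hγ x).imp fun i h => h.2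
      have hexδ : ∃ j, 0 < fAux lδ j x := (cover_exists_pos hδ x).imp fun j h => h.2
      set i0 := Nat.find hexγ with hi0
      set j0 := Nat.find hexδ with hj0
      have hi0p : i0 < p := by
        by_contra h
        have := fAux_eq_zero (l := lγ) (i := i0) (by omega) x
        have := Nat.find_spec hexγ
        rw [← hi0] at this
        linarith
      have hj0q : j0 < q := by
        by_contra h
        have := fAux_eq_zero (l := lδ) (i := j0) (by omega) x
        have := Nat.find_spec hexδ
        rw [← hj0] at this
        linarith
      have hSi0 : sAux lγ i0 x = 0 := by
        apply Finset.sum_eq_zero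
        intro k hk
        have hk' : k < i0 := Finset.mem_range.mp hk
        have := Nat.find_min hexγ hk'
        have := fAux_nonneg lγ k x
        linarith [not_lt.mp (Nat.find_min hexγ hk')]
      have hTj0 : sAux lδ j0 x = 0 := by
        apply Finset.sum_eq_zero
        intro k hk
        have hk' : k < j0 := Finset.mem_range.mp hk
        linarith [not_lt.mp (Nat.find_min hexδ hk'), fAux_nonneg lδ k x]
      have hF : 0 < sAux lγ p x := total_pos hγ x
      have hG : 0 < sAux lδ q x := total_pos hδ x
      have hxw : x ∈ wAux lγ lδ i0 j0 := by
        simp only [wAux, Set.mem_setOf_eq, hSi0, hTj0, zero_mul, max_self, lt_min_iff]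
        constructor
        · apply mul_pos _ hG
          rw [sAux_succ, hSi0, zero_add]
          exact Nat.find_spec hexγ
        · apply mul_pos _ hF
          rw [sAux_succ, hTj0, zero_add]
          exact Nat.find_spec hexδ
      refine Set.mem_sUnion.mpr ⟨wAux lγ lδ i0 j0, ?_, hxw⟩
      simp only [Finset.coe_image, Set.mem_image, Finset.mem_coe, Finset.mem_product]
      exact ⟨(i0, j0), by simp [Finset.mem_range, hi0p, hj0q], rfl⟩
  · -- refinement
    intro E hE
    simp only [Finset.mem_image] at hE
    obtain ⟨⟨i, j⟩, hij, rfl⟩ := hE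
    simp only [Finset.mem_product, Finset.mem_range] at hij
    refine ⟨lγ.getD i ∅, memγ i hij.1, lδ.getD j ∅, memδ j hij.2, ?_⟩
    intro x hx
    obtain ⟨h1, h2⟩ := wAux_pos hx
    exact ⟨(fAux_pos_iff (openγ i) x).mp h1, (fAux_pos_iff (openδ j) x).mp h2⟩
  · -- order bound
    apply ordC_le
    intro y
    set ε := (Finset.range p ×ˢ Finset.range q).image (fun ij => wAux lγ lδ ij.1 ij.2) with hε
    -- step 1 : bound by indexed pairs
    have step1 : (ε.filter (fun A => y ∈ A)).card ≤
        ((Finset.range p ×ˢ Finset.range q).filter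
          (fun ij => y ∈ wAux lγ lδ ij.1 ij.2)).card := by
      calc (ε.filter (fun A => y ∈ A)).card
          ≤ (((Finset.range p ×ˢ Finset.range q).filter
              (fun ij => y ∈ wAux lγ lδ ij.1 ij.2)).image (fun ij => wAux lγ lδ ij.1 ij.2)).card := by
            apply Finset.card_le_card
            intro A hA
            simp only [Finset.mem_filter, hε, Finset.mem_image] at hA
            obtain ⟨⟨ij, hij, rfl⟩, hy⟩ := hA
            exact Finset.mem_image_of_mem _ (Finset.mem_filter.mpr ⟨hij, hy⟩)
        _ ≤ _ := Finset.card_image_le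
    -- step 2 : rewrite as overlap condition and apply overlap_card
    set s : ℕ → ℝ := fun i => sAux lγ i y * sAux lδ q y with hs
    set t : ℕ → ℝ := fun j => sAux lδ j y * sAux lγ p y with ht
    have hG0 : (0:ℝ) ≤ sAux lδ q y := sAux_nonneg _ _ _
    have hF0 : (0:ℝ) ≤ sAux lγ p y := sAux_nonneg _ _ _
    have hsm : Monotone s := fun i i' h =>
      mul_le_mul_of_nonneg_right (sAux_mono lγ y h) hG0
    have htm : Monotone t := fun j j' h =>
      mul_le_mul_of_nonneg_right (sAux_mono lδ y h) hF0
    have step2 : ((Finset.range p ×ˢ Finset.range q).filter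
          (fun ij => y ∈ wAux lγ lδ ij.1 ij.2)) =
        ((Finset.range p ×ˢ Finset.range q).filter
          (fun ij => max (s ij.1) (t ij.2) < min (s (ij.1 + 1)) (t (ij.2 + 1)))) := by
      apply Finset.filter_congr
      intro ij _
      simp only [wAux, Set.mem_setOf_eq, hs, ht, hp, hq]
    have step3 := overlap_card s t hsm htm p q
    -- step 4 : bound the cards of the images
    have himγ : (((Finset.range p).filter (fun i => s i < s (i + 1))).image s).card ≤
        ordC γ + 1 := by
      calc (((Finset.range p).filter (fun i => s i < s (i + 1))).image s).card
          ≤ ((Finset.range p).filter (fun i => s i < s (i + 1))).card := Finset.card_image_le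
        _ ≤ (γ.filter (fun A => y ∈ A)).card := by
            apply Finset.card_le_card_of_injOn (fun i => lγ.getD i ∅)
            · intro i hi
              simp only [Finset.mem_coe, Finset.mem_filter, Finset.mem_range] at hi
              obtain ⟨hip, hlt⟩ := hi
              have hfi : 0 < fAux lγ i y := by
                simp only [hs, sAux_succ] at hlt
                nlinarith [fAux_nonneg lγ i y, hG0]
              exact Finset.mem_filter.mpr ⟨memγ i hip, (fAux_pos_iff (openγ i) y).mp hfi⟩
            · intro i hi i' hi' he
              simp only [Finset.coe_filter, Set.mem_setOf_eq, Finset.mem_range] at hi hi'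
              have hnd : lγ.Nodup := Finset.nodup_toList γ
              have h1 : lγ.get ⟨i, hi.1⟩ = lγ.get ⟨i', hi'.1⟩ := by
                rw [← List.getD_eq_get lγ ∅ ⟨i, hi.1⟩, ← List.getD_eq_get lγ ∅ ⟨i', hi'.1⟩]
                exact he
              have := List.nodup_iff_injective_get.mp hnd h1
              exact congrArg Fin.val this
        _ ≤ ordC γ + 1 := card_le_ordC γ y
    have himδ : (((Finset.range q).filter (fun j => t j < t (j + 1))).image t).card ≤
        ordC δ + 1 := by
      calc (((Finset.range q).filter (fun j => t j < t (j + 1))).image t).card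
          ≤ ((Finset.range q).filter (fun j => t j < t (j + 1))).card := Finset.card_image_le
        _ ≤ (δ.filter (fun A => y ∈ A)).card := by
            apply Finset.card_le_card_of_injOn (fun j => lδ.getD j ∅)
            · intro j hj
              simp only [Finset.mem_coe, Finset.mem_filter, Finset.mem_range] at hj
              obtain ⟨hjq, hlt⟩ := hj
              have hfj : 0 < fAux lδ j y := by
                simp only [ht, sAux_succ] at hlt
                nlinarith [fAux_nonneg lδ j y, hF0]
              exact Finset.mem_filter.mpr ⟨memδ j hjq, (fAux_pos_iff (openδ j) y).mp hfj⟩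
            · intro j hj j' hj' he
              simp only [Finset.coe_filter, Set.mem_setOf_eq, Finset.mem_range] at hj hj'
              have hnd : lδ.Nodup := Finset.nodup_toList δ
              have h1 : lδ.get ⟨j, hj.1⟩ = lδ.get ⟨j', hj'.1⟩ := by
                rw [← List.getD_eq_get lδ ∅ ⟨j, hj.1⟩, ← List.getD_eq_get lδ ∅ ⟨j', hj'.1⟩]
                exact he
              have := List.nodup_iff_injective_get.mp hnd h1
              exact congrArg Fin.val this
        _ ≤ ordC δ + 1 := card_le_ordC δ y
    -- step 5 : the two images intersect (both contain 0)
    have hF : 0 < sAux lγ p y := total_pos hγ y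
    have hG : 0 < sAux lδ q y := total_pos hδ y
    have hexγ : ∃ i, 0 < fAux lγ i y := (cover_exists_pos hγ y).imp fun i h => h.2
    have hexδ : ∃ j, 0 < fAux lδ j y := (cover_exists_pos hδ y).imp fun j h => h.2
    set i0 := Nat.find hexγ with hi0
    set j0 := Nat.find hexδ with hj0
    have hi0p : i0 < p := by
      by_contra h
      have h1 := fAux_eq_zero (l := lγ) (i := i0) (by omega) y
      have h2 := Nat.find_spec hexγ
      rw [← hi0] at h2
      linarith
    have hj0q : j0 < q := by
      by_contra h
      have h1 := fAux_eq_zero (l := lδ) (i := j0) (by omega) y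
      have h2 := Nat.find_spec hexδ
      rw [← hj0] at h2
      linarith
    have hSi0 : sAux lγ i0 y = 0 := by
      apply Finset.sum_eq_zero
      intro k hk
      linarith [not_lt.mp (Nat.find_min hexγ (Finset.mem_range.mp hk)), fAux_nonneg lγ k y]
    have hTj0 : sAux lδ j0 y = 0 := by
      apply Finset.sum_eq_zero
      intro k hk
      linarith [not_lt.mp (Nat.find_min hexδ (Finset.mem_range.mp hk)), fAux_nonneg lδ k y]
    have h0γ : (0:ℝ) ∈ ((Finset.range p).filter (fun i => s i < s (i + 1))).image s := by
      refine Finset.mem_image.mpr ⟨i0, ?_, ?_⟩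
      · refine Finset.mem_filter.mpr ⟨Finset.mem_range.mpr hi0p, ?_⟩
        simp only [hs, sAux_succ, hSi0]
        have := Nat.find_spec hexγ
        rw [← hi0] at this
        nlinarith
      · simp [hs, hSi0]
    have h0δ : (0:ℝ) ∈ ((Finset.range q).filter (fun j => t j < t (j + 1))).image t := by
      refine Finset.mem_image.mpr ⟨j0, ?_, ?_⟩
      · refine Finset.mem_filter.mpr ⟨Finset.mem_range.mpr hj0q, ?_⟩
        simp only [ht, sAux_succ, hTj0]
        have := Nat.find_spec hexδ
        rw [← hj0] at this
        nlinarith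
      · simp [ht, hTj0]
    have hinter : 1 ≤ ((((Finset.range p).filter (fun i => s i < s (i + 1))).image s) ∩
        (((Finset.range q).filter (fun j => t j < t (j + 1))).image t)).card :=
      Finset.card_pos.mpr ⟨0, Finset.mem_inter.mpr ⟨h0γ, h0δ⟩⟩
    have huni := Finset.card_union_add_card_inter
      (((Finset.range p).filter (fun i => s i < s (i + 1))).image s)
      (((Finset.range q).filter (fun j => t j < t (j + 1))).image t)
    rw [step2] at step1
    omega

lemma ordC_empty_of_isEmpty {Y : Type*} [IsEmpty Y] (α : Finset (Set Y)) : ordC α = 0 := by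
  have h : {m : ℕ | ∃ y : Y, m + 1 ≤ (α.filter (fun A => y ∈ A)).card} = ∅ := by
    ext m
    simp only [Set.mem_setOf_eq, Set.mem_empty_iff_false, iff_false]
    rintro ⟨y, -⟩
    exact IsEmpty.false y
  rw [ordC, h, csSup_empty]
  rfl

/-- Subadditivity of `D`: `D(α ∨ β) ≤ D(α) + D(β)` for finite open covers of a compact
metric space. -/
theorem stmt10 {Y : Type*} [MetricSpace Y] [CompactSpace Y]
    (α β : Finset (Set Y)) (hα : IsOpenCover α) (hβ : IsOpenCover β) :
    Dcov (joinC α β) ≤ Dcov α + Dcov β := by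
  classical
  rcases isEmpty_or_nonempty Y with hY | hY
  · have hmem : (0:ℕ) ∈ {m : ℕ | ∃ ε : Finset (Set Y),
        IsOpenCover ε ∧ RefinesC ε (joinC α β) ∧ ordC ε = m} := by
      refine ⟨∅, ⟨fun A hA => absurd hA (Finset.notMem_empty A), ?_⟩,
        fun B hB => absurd hB (Finset.notMem_empty B), ordC_empty_of_isEmpty ∅⟩
      rw [Set.univ_eq_empty_iff.mpr hY]
      simp
    exact le_trans (Nat.sInf_le hmem) (Nat.zero_le _)
  · have hneα : {m : ℕ | ∃ ε : Finset (Set Y),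
        IsOpenCover ε ∧ RefinesC ε α ∧ ordC ε = m}.Nonempty :=
      ⟨ordC α, α, hα, fun B hB => ⟨B, hB, subset_rfl⟩, rfl⟩
    have hneβ : {m : ℕ | ∃ ε : Finset (Set Y),
        IsOpenCover ε ∧ RefinesC ε β ∧ ordC ε = m}.Nonempty :=
      ⟨ordC β, β, hβ, fun B hB => ⟨B, hB, subset_rfl⟩, rfl⟩
    obtain ⟨γ, hγoc, hγref, hγord⟩ := Nat.sInf_mem hneα
    obtain ⟨δ, hδoc, hδref, hδord⟩ := Nat.sInf_mem hneβ
    obtain ⟨ε, hεoc, hεref, hεord⟩ := key_construction hγoc hδoc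
    have href : RefinesC ε (joinC α β) := by
      intro E hE
      obtain ⟨C, hC, D, hD, hsub⟩ := hεref E hE
      obtain ⟨A, hA, hCA⟩ := hγref C hC
      obtain ⟨B, hB, hDB⟩ := hδref D hD
      refine ⟨A ∩ B, ?_, ?_⟩
      · exact Finset.mem_image.mpr ⟨(A, B), Finset.mem_product.mpr ⟨hA, hB⟩, rfl⟩
      · exact hsub.trans (Set.inter_subset_inter hCA hDB)
    have hmem : ordC ε ∈ {m : ℕ | ∃ ε' : Finset (Set Y),
        IsOpenCover ε' ∧ RefinesC ε' (joinC α β) ∧ ordC ε' = m} := ⟨ε, hεoc, href, rfl⟩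
    calc Dcov (joinC α β) ≤ ordC ε := Nat.sInf_le hmem
      _ ≤ ordC γ + ordC δ := hεord
      _ = Dcov α + Dcov β := by unfold Dcov; rw [hγord, hδord]
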